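/- Let (y₁,y₂) ∈ B. For all ε>0 and k>0 there exist η>0 and n∈ℕ such that for every y ∈ [ε,1-ε], the number of words ω ∈ {0,2}ⁿ with [y-η, y+η] ⊆ V_ω([0,1]) is at least k. -/

import Mathlib

open Set

/-- The two affine maps V₀(y) = y₁ y (for `false`) and V₂(y) = y₂ + (1-y₂) y (for `true`). -/
noncomputable def zipV (y₁ y₂ : ℝ) : Bool → ℝ → ℝ
  | false => fun y => y₁ * y
  | true => fun y => y₂ + (1 - y₂) * y

/-- For a word ω = i₁…i_n, the composition V_ω = V_{i₁} ∘ … ∘ V_{i_n}. -/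
noncomputable def zipVword (y₁ y₂ : ℝ) {n : ℕ} (ω : Fin n → Bool) : ℝ → ℝ :=
  (List.ofFn ω).foldr (fun i g => zipV y₁ y₂ i ∘ g) id

lemma zipVword_nil (y₁ y₂ : ℝ) (ω : Fin 0 → Bool) (t : ℝ) :
    zipVword y₁ y₂ ω t = t := by
  simp [zipVword]

lemma zipVword_cons (y₁ y₂ : ℝ) {n : ℕ} (i : Bool) (ω : Fin n → Bool) (t : ℝ) :
    zipVword y₁ y₂ (Fin.cons i ω) t = zipV y₁ y₂ i (zipVword y₁ y₂ ω t) := by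
  simp only [zipVword, List.ofFn_succ, Fin.cons_zero, Fin.cons_succ, List.foldr_cons,
    Function.comp_apply]

open scoped Classical in
/-- deep-multiplicity counting function -/
noncomputable def Dd (y₁ y₂ c : ℝ) : ℕ → ℝ → ℕ
  | 0, y => if y ∈ Icc c (1 - c) then 1 else 0
  | n+1, y => Dd y₁ y₂ c n (y / y₁) + Dd y₁ y₂ c n ((y - y₂) / (1 - y₂))

section main

variable {y₁ y₂ c : ℝ}

lemma card_sum_le {n : ℕ} (P : (Fin (n+1) → Bool) → Prop) (Q R : (Fin n → Bool) → Prop)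
    (hf : ∀ x : {ω // Q ω}, P (Fin.cons false x.1))
    (hg : ∀ x : {ω // R ω}, P (Fin.cons true x.1)) :
    Nat.card {ω // Q ω} + Nat.card {ω // R ω} ≤ Nat.card {ω // P ω} := by
  rw [← Nat.card_sum]
  refine Nat.card_le_card_of_injective (Sum.elim
    (fun x => (⟨Fin.cons false x.1, hf x⟩ : {ω // P ω}))
    (fun x => (⟨Fin.cons true x.1, hg x⟩ : {ω // P ω}))) ?_
  rintro (⟨ω, hω⟩ | ⟨ω, hω⟩) (⟨ω', hω'⟩ | ⟨ω', hω'⟩) h <;>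
    simp only [Sum.elim_inl, Sum.elim_inr, Subtype.mk.injEq, Fin.cons_inj] at h
  · obtain ⟨-, rfl⟩ := h; rfl
  · simp at h
  · simp at h
  · obtain ⟨-, rfl⟩ := h; rfl

/-- D is a lower bound for the number of words in whose image y is c-deep. -/
lemma Dd_le_card (h1 : 0 < y₁) (h2 : y₂ < 1) : ∀ (n : ℕ) (y : ℝ),
    Dd y₁ y₂ c n y ≤ Nat.card {ω : Fin n → Bool //
      zipVword y₁ y₂ ω c ≤ y ∧ y ≤ zipVword y₁ y₂ ω (1 - c)} := by
  have h2' : (0:ℝ) < 1 - y₂ := by linarith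
  intro n
  induction n with
  | zero =>
    intro y
    by_cases hy : y ∈ Icc c (1 - c)
    · have hne : Nonempty {ω : Fin 0 → Bool //
          zipVword y₁ y₂ ω c ≤ y ∧ y ≤ zipVword y₁ y₂ ω (1 - c)} := by
        refine ⟨⟨fun i => false, ?_, ?_⟩⟩ <;> rw [zipVword_nil]
        · exact hy.1
        · exact hy.2
      have := Nat.card_pos (α := {ω : Fin 0 → Bool //
          zipVword y₁ y₂ ω c ≤ y ∧ y ≤ zipVword y₁ y₂ ω (1 - c)})
      simp only [Dd, if_pos hy]
      omega
    · simp only [Dd, if_neg hy]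
      exact Nat.zero_le _
  | succ n ih =>
    intro y
    have hf : ∀ x : {ω : Fin n → Bool //
        zipVword y₁ y₂ ω c ≤ y / y₁ ∧ y / y₁ ≤ zipVword y₁ y₂ ω (1 - c)},
        zipVword y₁ y₂ (Fin.cons false x.1) c ≤ y ∧
        y ≤ zipVword y₁ y₂ (Fin.cons false x.1) (1 - c) := by
      rintro ⟨ω, hω1, hω2⟩
      rw [zipVword_cons, zipVword_cons]
      constructor
      · show y₁ * _ ≤ y
        rw [le_div_iff₀ h1] at hω1; linarith [hω1]
      · show y ≤ y₁ * _
        rw [div_le_iff₀ h1] at hω2; linarith [hω2]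
    have hg : ∀ x : {ω : Fin n → Bool //
        zipVword y₁ y₂ ω c ≤ (y - y₂) / (1 - y₂) ∧
          (y - y₂) / (1 - y₂) ≤ zipVword y₁ y₂ ω (1 - c)},
        zipVword y₁ y₂ (Fin.cons true x.1) c ≤ y ∧
        y ≤ zipVword y₁ y₂ (Fin.cons true x.1) (1 - c) := by
      rintro ⟨ω, hω1, hω2⟩
      rw [zipVword_cons, zipVword_cons]
      constructor
      · show y₂ + (1 - y₂) * _ ≤ y
        rw [le_div_iff₀ h2'] at hω1; linarith [hω1]
      · show y ≤ y₂ + (1 - y₂) * _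
        rw [div_le_iff₀ h2'] at hω2; linarith [hω2]
    have key := card_sum_le
      (fun ω => zipVword y₁ y₂ ω c ≤ y ∧ y ≤ zipVword y₁ y₂ ω (1 - c))
      (fun ω => zipVword y₁ y₂ ω c ≤ y / y₁ ∧ y / y₁ ≤ zipVword y₁ y₂ ω (1 - c))
      (fun ω => zipVword y₁ y₂ ω c ≤ (y - y₂) / (1 - y₂) ∧
        (y - y₂) / (1 - y₂) ≤ zipVword y₁ y₂ ω (1 - c)) hf hg
    calc Dd y₁ y₂ c (n+1) y
        = Dd y₁ y₂ c n (y / y₁) + Dd y₁ y₂ c n ((y - y₂) / (1 - y₂)) := rfl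
    _ ≤ _ := le_trans (Nat.add_le_add (ih _) (ih _)) key

/-- pointwise monotonicity of Dd in n -/
lemma Dd_mono (h1 : 0 < y₁) (h1' : y₁ < 1) (h2 : 0 < y₂) (h2' : y₂ < 1)
    (hc : 0 < c) (hc1 : c < 1)
    (hcL : y₂ + c * (1 - y₂) ≤ y₁ ^ 2 * (1 - c)) :
    ∀ (n : ℕ) (y : ℝ), Dd y₁ y₂ c n y ≤ Dd y₁ y₂ c (n+1) y := by
  have h12 : (0:ℝ) < 1 - y₂ := by linarith
  intro n
  induction n with
  | zero =>
    intro y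
    by_cases hy : y ∈ Icc c (1 - c)
    · simp only [Dd, if_pos hy]
      by_cases hy2 : y ≤ y₁ * (1 - c)
      · have hf : y / y₁ ∈ Icc c (1 - c) := by
          constructor
          · rw [le_div_iff₀ h1]; nlinarith [hy.1]
          · rw [div_le_iff₀ h1]; nlinarith
        rw [if_pos hf]
        omega
      · push_neg at hy2
        have hgl : y₂ + c * (1 - y₂) ≤ y := by nlinarith
        have hg : (y - y₂) / (1 - y₂) ∈ Icc c (1 - c) := by
          constructor
          · rw [le_div_iff₀ h12]; nlinarith
          · rw [div_le_iff₀ h12]; nlinarith [hy.2]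
        rw [if_pos hg]
        omega
    · simp only [Dd, if_neg hy]
      exact Nat.zero_le _
  | succ n ih =>
    intro y
    exact Nat.add_le_add (ih _) (ih _)

lemma Dd_mono' (h1 : 0 < y₁) (h1' : y₁ < 1) (h2 : 0 < y₂) (h2' : y₂ < 1)
    (hc : 0 < c) (hc1 : c < 1)
    (hcL : y₂ + c * (1 - y₂) ≤ y₁ ^ 2 * (1 - c)) :
    ∀ {m m' : ℕ}, m ≤ m' → ∀ y : ℝ, Dd y₁ y₂ c m y ≤ Dd y₁ y₂ c m' y := by
  intro m m' hm
  induction m' , hm using Nat.le_induction with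
  | base => exact fun y => le_rfl
  | succ m' hm ih =>
    exact fun y => le_trans (ih y) (Dd_mono h1 h1' h2 h2' hc hc1 hcL m' y)

lemma Dd_one (h1 : 0 < y₁) (h1' : y₁ < 1) (h2 : 0 < y₂) (h2' : y₂ < 1)
    (hc : 0 < c) (hc1 : c < 1)
    (hcL : y₂ + c * (1 - y₂) ≤ y₁ ^ 2 * (1 - c)) (n : ℕ) {y : ℝ}
    (hy : y ∈ Icc c (1 - c)) : 1 ≤ Dd y₁ y₂ c n y := by
  have h0 : Dd y₁ y₂ c 0 y = 1 := by simp only [Dd, if_pos hy]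
  have := Dd_mono' h1 h1' h2 h2' hc hc1 hcL (Nat.zero_le n) y
  omega

/-- branching step: in the middle region both children are deep. -/
lemma Dd_branch (h1 : 0 < y₁) (h1' : y₁ < 1) (h2 : 0 < y₂) (h2' : y₂ < 1)
    (hc : 0 < c) (hc1 : c < 1)
    (hcL : y₂ + c * (1 - y₂) ≤ y₁ ^ 2 * (1 - c)) {n j : ℕ} {y : ℝ}
    (hM1 : y₂ + c * (1 - y₂) ≤ y) (hM2 : y ≤ y₁ * (1 - c))
    (hj : ∀ z ∈ Icc c (1 - c), j ≤ Dd y₁ y₂ c n z) :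
    j + 1 ≤ Dd y₁ y₂ c (n+1) y := by
  have h12 : (0:ℝ) < 1 - y₂ := by linarith
  have hf : y / y₁ ∈ Icc c (1 - c) := by
    constructor
    · rw [le_div_iff₀ h1]; nlinarith
    · rw [div_le_iff₀ h1]; nlinarith
  have hg : (y - y₂) / (1 - y₂) ∈ Icc c (1 - c) := by
    constructor
    · rw [le_div_iff₀ h12]; nlinarith
    · rw [div_le_iff₀ h12]; nlinarith
  have e1 := hj _ hf
  have e2 := Dd_one h1 h1' h2 h2' hc hc1 hcL n hg
  show j + 1 ≤ Dd y₁ y₂ c n (y / y₁) + Dd y₁ y₂ c n ((y - y₂) / (1 - y₂))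
  omega

lemma Dd_leftReach (h1 : 0 < y₁) (h1' : y₁ < 1) (h2 : 0 < y₂) (h2' : y₂ < 1)
    (hc : 0 < c) (hc1 : c < 1)
    (hcL : y₂ + c * (1 - y₂) ≤ y₁ ^ 2 * (1 - c)) {n j : ℕ}
    (hj : ∀ z ∈ Icc c (1 - c), j ≤ Dd y₁ y₂ c n z) :
    ∀ (s : ℕ) (y : ℝ), c ≤ y → y ≤ y₁ * (1 - c) →
      (y₂ + c * (1 - y₂)) * y₁ ^ s < y → j + 1 ≤ Dd y₁ y₂ c (n + 1 + s) y := by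
  intro s
  induction s with
  | zero =>
    intro y hyl hyr hinv
    rw [pow_zero, mul_one] at hinv
    exact Dd_branch h1 h1' h2 h2' hc hc1 hcL hinv.le hyr hj
  | succ s ih =>
    intro y hyl hyr hinv
    by_cases hy : y₂ + c * (1 - y₂) ≤ y
    · have hb := Dd_branch h1 h1' h2 h2' hc hc1 hcL hy hyr hj
      have := Dd_mono' h1 h1' h2 h2' hc hc1 hcL
        (show n + 1 ≤ n + 1 + (s+1) by omega) y
      omega
    · push_neg at hy
      have hy0 : 0 ≤ y := le_trans hc.le hyl
      have hfl : c ≤ y / y₁ := by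
        rw [le_div_iff₀ h1]; nlinarith
      have hfr : y / y₁ ≤ y₁ * (1 - c) := by
        rw [div_le_iff₀ h1]
        calc y ≤ y₂ + c * (1 - y₂) := hy.le
        _ ≤ y₁ ^ 2 * (1 - c) := hcL
        _ = y₁ * (1 - c) * y₁ := by ring
      have hfinv : (y₂ + c * (1 - y₂)) * y₁ ^ s < y / y₁ := by
        rw [lt_div_iff₀ h1]
        calc (y₂ + c * (1 - y₂)) * y₁ ^ s * y₁
            = (y₂ + c * (1 - y₂)) * y₁ ^ (s+1) := by ring
        _ < y := hinv
      have := ih (y / y₁) hfl hfr hfinv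
      have heq : n + 1 + (s + 1) = (n + 1 + s) + 1 := by omega
      rw [heq]
      show j + 1 ≤ Dd y₁ y₂ c (n+1+s) (y / y₁) + Dd y₁ y₂ c (n+1+s) ((y - y₂) / (1 - y₂))
      omega

lemma Dd_rightReach (h1 : 0 < y₁) (h1' : y₁ < 1) (h2 : 0 < y₂) (h2' : y₂ < 1)
    (hc : 0 < c) (hc1 : c < 1)
    (hcL : y₂ + c * (1 - y₂) ≤ y₁ ^ 2 * (1 - c))
    (hcR : (2 - y₂) * y₂ + c * (1 - y₂) ^ 2 ≤ y₁ * (1 - c)) {n j : ℕ}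
    (hj : ∀ z ∈ Icc c (1 - c), j ≤ Dd y₁ y₂ c n z) :
    ∀ (s : ℕ) (y : ℝ), y₂ + c * (1 - y₂) ≤ y → y ≤ 1 - c →
      (1 - y₁ * (1 - c)) * (1 - y₂) ^ s < 1 - y → j + 1 ≤ Dd y₁ y₂ c (n + 1 + s) y := by
  have h12 : (0:ℝ) < 1 - y₂ := by linarith
  intro s
  induction s with
  | zero =>
    intro y hyl hyr hinv
    rw [pow_zero, mul_one] at hinv
    have : y ≤ y₁ * (1 - c) := by linarith
    exact Dd_branch h1 h1' h2 h2' hc hc1 hcL hyl this hj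
  | succ s ih =>
    intro y hyl hyr hinv
    by_cases hy : y ≤ y₁ * (1 - c)
    · have hb := Dd_branch h1 h1' h2 h2' hc hc1 hcL hyl hy hj
      have := Dd_mono' h1 h1' h2 h2' hc hc1 hcL
        (show n + 1 ≤ n + 1 + (s+1) by omega) y
      omega
    · push_neg at hy
      have hgl : y₂ + c * (1 - y₂) ≤ (y - y₂) / (1 - y₂) := by
        rw [le_div_iff₀ h12]; nlinarith
      have hgr : (y - y₂) / (1 - y₂) ≤ 1 - c := by
        rw [div_le_iff₀ h12]; nlinarith
      have hginv : (1 - y₁ * (1 - c)) * (1 - y₂) ^ s < 1 - (y - y₂) / (1 - y₂) := by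
        have : 1 - (y - y₂) / (1 - y₂) = (1 - y) / (1 - y₂) := by
          field_simp
          ring
        rw [this, lt_div_iff₀ h12]
        calc (1 - y₁ * (1 - c)) * (1 - y₂) ^ s * (1 - y₂)
            = (1 - y₁ * (1 - c)) * (1 - y₂) ^ (s+1) := by ring
        _ < 1 - y := hinv
      have := ih ((y - y₂) / (1 - y₂)) hgl hgr hginv
      have heq : n + 1 + (s + 1) = (n + 1 + s) + 1 := by omega
      rw [heq]
      show j + 1 ≤ Dd y₁ y₂ c (n+1+s) (y / y₁) + Dd y₁ y₂ c (n+1+s) ((y - y₂) / (1 - y₂))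
      omega

/-- Main growth lemma. -/
lemma Dd_main (h1 : 0 < y₁) (h1' : y₁ < 1) (h2 : 0 < y₂) (h2' : y₂ < 1)
    (hc : 0 < c) (hc1 : c < 1)
    (hcL : y₂ + c * (1 - y₂) ≤ y₁ ^ 2 * (1 - c))
    (hcR : (2 - y₂) * y₂ + c * (1 - y₂) ^ 2 ≤ y₁ * (1 - c)) :
    ∀ j : ℕ, ∃ n : ℕ, ∀ y ∈ Icc c (1 - c), j ≤ Dd y₁ y₂ c n y := by
  have h12 : (0:ℝ) < 1 - y₂ := by linarith
  have hM0 : 0 < y₂ + c * (1 - y₂) := by nlinarith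
  have hR0 : 0 < 1 - y₁ * (1 - c) := by nlinarith
  obtain ⟨t₁, ht₁⟩ := exists_pow_lt_of_lt_one (div_pos hc hM0) h1'
  obtain ⟨t₂, ht₂⟩ := exists_pow_lt_of_lt_one (div_pos hc hR0) (by linarith : 1 - y₂ < 1)
  have ht₁' : (y₂ + c * (1 - y₂)) * y₁ ^ t₁ < c := by
    have := (mul_lt_mul_iff_right₀ hM0).2 ht₁
    rwa [mul_div_cancel₀ _ (ne_of_gt hM0)] at this
  have ht₂' : (1 - y₁ * (1 - c)) * (1 - y₂) ^ t₂ < c := by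
    have := (mul_lt_mul_iff_right₀ hR0).2 ht₂
    rwa [mul_div_cancel₀ _ (ne_of_gt hR0)] at this
  intro j
  induction j with
  | zero => exact ⟨0, fun y _ => Nat.zero_le _⟩
  | succ j ihj =>
    obtain ⟨n, hn⟩ := ihj
    refine ⟨n + 1 + max t₁ t₂, fun y hy => ?_⟩
    by_cases hcase : y ≤ y₁ * (1 - c)
    · have hinv : (y₂ + c * (1 - y₂)) * y₁ ^ t₁ < y := lt_of_lt_of_le ht₁' hy.1
      have := Dd_leftReach h1 h1' h2 h2' hc hc1 hcL hn t₁ y hy.1 hcase hinv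
      have hmono := Dd_mono' h1 h1' h2 h2' hc hc1 hcL
        (show n + 1 + t₁ ≤ n + 1 + max t₁ t₂ by omega) y
      omega
    · push_neg at hcase
      have hM : y₂ + c * (1 - y₂) ≤ y := by nlinarith
      have hinv : (1 - y₁ * (1 - c)) * (1 - y₂) ^ t₂ < 1 - y := by
        have : y ≤ 1 - c := hy.2
        linarith
      have := Dd_rightReach h1 h1' h2 h2' hc hc1 hcL hcR hn t₂ y hM hy.2 hinv
      have hmono := Dd_mono' h1 h1' h2 h2' hc hc1 hcL
        (show n + 1 + t₂ ≤ n + 1 + max t₁ t₂ by omega) y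
      omega

/-- Every word map is affine with slope at least (min y₁ (1-y₂))^n. -/
lemma zipVword_affine (h1 : 0 < y₁) (h2' : y₂ < 1) :
    ∀ {n : ℕ} (ω : Fin n → Bool), ∃ a r : ℝ,
      (min y₁ (1 - y₂)) ^ n ≤ r ∧ ∀ t, zipVword y₁ y₂ ω t = a + r * t := by
  intro n
  induction n with
  | zero =>
    intro ω
    exact ⟨0, 1, by norm_num, fun t => by rw [zipVword_nil]; ring⟩
  | succ n ih =>
    intro ω
    obtain ⟨a, r, hr, hV⟩ := ih (Fin.tail ω)
    have hmin : 0 < min y₁ (1 - y₂) := lt_min h1 (by linarith)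
    have hr0 : 0 ≤ r := le_trans (pow_nonneg hmin.le n) hr
    have hcons : ∀ t, zipVword y₁ y₂ ω t = zipV y₁ y₂ (ω 0) (zipVword y₁ y₂ (Fin.tail ω) t) := by
      intro t
      conv_lhs => rw [← Fin.cons_self_tail ω]
      rw [zipVword_cons]
    cases hω0 : ω 0 with
    | false =>
      refine ⟨y₁ * a, y₁ * r, ?_, fun t => ?_⟩
      · calc (min y₁ (1 - y₂)) ^ (n+1) = min y₁ (1 - y₂) * (min y₁ (1 - y₂)) ^ n := by ring
        _ ≤ y₁ * r := mul_le_mul (min_le_left _ _) hr (pow_nonneg hmin.le n) h1.le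
      · rw [hcons t, hω0, hV t]
        show y₁ * (a + r * t) = y₁ * a + y₁ * r * t
        ring
    | true =>
      refine ⟨y₂ + (1 - y₂) * a, (1 - y₂) * r, ?_, fun t => ?_⟩
      · calc (min y₁ (1 - y₂)) ^ (n+1) = min y₁ (1 - y₂) * (min y₁ (1 - y₂)) ^ n := by ring
        _ ≤ (1 - y₂) * r := mul_le_mul (min_le_right _ _) hr (pow_nonneg hmin.le n) (by linarith)
      · rw [hcons t, hω0, hV t]
        show y₂ + (1 - y₂) * (a + r * t) = y₂ + (1 - y₂) * a + (1 - y₂) * r * t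
        ring

end main

theorem many_covering_words (y₁ y₂ : ℝ)
    (hy₁ : y₁ ∈ Ioo (0:ℝ) 1) (hy₂ : y₂ ∈ Ioo (0:ℝ) 1)
    (hB₁ : y₂ < y₁ ^ 2) (hB₂ : (2 - y₂) * y₂ < y₁) :
    ∀ ε : ℝ, 0 < ε → ∀ k : ℕ, ∃ η : ℝ, 0 < η ∧ ∃ n : ℕ,
      ∀ y ∈ Icc ε (1 - ε),
        k ≤ Nat.card {ω : Fin n → Bool //
          Icc (y - η) (y + η) ⊆ zipVword y₁ y₂ ω '' Icc 0 1} := by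
  obtain ⟨h1, h1'⟩ := hy₁
  obtain ⟨h2, h2'⟩ := hy₂
  intro ε hε k
  set A : ℝ := (y₁ ^ 2 - y₂) / (1 - y₂ + y₁ ^ 2) with hA
  set B : ℝ := (y₁ - (2 - y₂) * y₂) / ((1 - y₂) ^ 2 + y₁) with hB
  have hAden : (0:ℝ) < 1 - y₂ + y₁ ^ 2 := by nlinarith
  have hBden : (0:ℝ) < (1 - y₂) ^ 2 + y₁ := by nlinarith
  have hApos : 0 < A := div_pos (by linarith) hAden
  have hBpos : 0 < B := div_pos (by linarith) hBden
  set c : ℝ := min ε (min A B) with hcdef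
  have hc : 0 < c := lt_min hε (lt_min hApos hBpos)
  have hcA : c ≤ A := le_trans (min_le_right _ _) (min_le_left _ _)
  have hcB : c ≤ B := le_trans (min_le_right _ _) (min_le_right _ _)
  have hc1 : c < 1 := by
    have : A < 1 := by
      rw [div_lt_one hAden]; linarith
    linarith [hcA]
  have hcL : y₂ + c * (1 - y₂) ≤ y₁ ^ 2 * (1 - c) := by
    have := (le_div_iff₀ hAden).1 hcA
    nlinarith
  have hcR : (2 - y₂) * y₂ + c * (1 - y₂) ^ 2 ≤ y₁ * (1 - c) := by
    have := (le_div_iff₀ hBden).1 hcB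
    nlinarith
  obtain ⟨n, hn⟩ := Dd_main h1 h1' h2 h2' hc hc1 hcL hcR k
  have hmin : 0 < min y₁ (1 - y₂) := lt_min h1 (by linarith)
  refine ⟨c * (min y₁ (1 - y₂)) ^ n, by positivity, n, fun y hy => ?_⟩
  set η : ℝ := c * (min y₁ (1 - y₂)) ^ n with hη
  have hcε : c ≤ ε := min_le_left _ _
  have hy' : y ∈ Icc c (1 - c) := ⟨le_trans hcε hy.1, le_trans hy.2 (by linarith)⟩
  have hk : k ≤ Dd y₁ y₂ c n y := hn y hy'
  have hle := Dd_le_card (c := c) h1 h2' n y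
  -- injection from deep words to covering words
  have hsub : ∀ ω : Fin n → Bool,
      (zipVword y₁ y₂ ω c ≤ y ∧ y ≤ zipVword y₁ y₂ ω (1 - c)) →
      Icc (y - η) (y + η) ⊆ zipVword y₁ y₂ ω '' Icc 0 1 := by
    intro ω hω
    obtain ⟨a, r, hr, hV⟩ := zipVword_affine h1 h2' ω
    have hr0 : 0 < r := lt_of_lt_of_le (pow_pos hmin n) hr
    have hrc : η ≤ r * c := by
      rw [hη]
      calc c * (min y₁ (1 - y₂)) ^ n = (min y₁ (1 - y₂)) ^ n * c := by ring
      _ ≤ r * c := mul_le_mul_of_nonneg_right hr hc.le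
    have h1ω := hω.1; have h2ω := hω.2
    rw [hV] at h1ω h2ω
    intro z hz
    refine ⟨(z - a) / r, ⟨?_, ?_⟩, ?_⟩
    · rw [le_div_iff₀ hr0]
      have : y - η ≤ z := hz.1
      nlinarith
    · rw [div_le_iff₀ hr0]
      have : z ≤ y + η := hz.2
      nlinarith
    · rw [hV]
      field_simp
      ring
  have hinj : Nat.card {ω : Fin n → Bool //
        zipVword y₁ y₂ ω c ≤ y ∧ y ≤ zipVword y₁ y₂ ω (1 - c)} ≤
      Nat.card {ω : Fin n → Bool //
        Icc (y - η) (y + η) ⊆ zipVword y₁ y₂ ω '' Icc 0 1} := by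
    refine Nat.card_le_card_of_injective (fun x => ⟨x.1, hsub x.1 x.2⟩) ?_
    intro a b h
    simp only [Subtype.mk.injEq] at h
    exact Subtype.ext h
  omega
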